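/- Let f be a flow with resistances r_e = (w_e + ε|w|₁/(3m))/u_e² whose energy satisfies E_r(f) ≤ (1+ε)|w|₁, where 0 < ε < 1/2. Then every edge has congestion at most 3√(m/ε): for all e, |f(e)|/u_e ≤ 3√(m/ε). -/

import Mathlib

open Finset

/-- If a flow with resistances r_e = (w_e + ε|w|₁/(3m))/u_e² has energy at most
(1+ε)|w|₁, then every edge has congestion at most 3√(m/ε). -/
theorem max_congestion_bound {E : Type*} [Fintype E]
    (ε : ℝ) (hε0 : 0 < ε) (hε1 : ε < 1 / 2)
    (w u f r : E → ℝ)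
    (hw : ∀ e, 1 ≤ w e) (hu : ∀ e, 0 < u e)
    (hm : 1 ≤ Fintype.card E)
    (hr : ∀ e, r e = (w e + ε * (∑ e', w e') / (3 * (Fintype.card E : ℝ))) / u e ^ 2)
    (henergy : ∑ e, r e * f e ^ 2 ≤ (1 + ε) * ∑ e, w e) :
    ∀ e, |f e| / u e ≤ 3 * Real.sqrt ((Fintype.card E : ℝ) / ε) := by
  intro e
  set m : ℝ := (Fintype.card E : ℝ) with hmdef
  have hm1 : (1:ℝ) ≤ m := by rw [hmdef]; exact_mod_cast hm
  have hm0 : 0 < m := by linarith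
  set W : ℝ := ∑ e', w e' with hW
  have hW1 : m ≤ W := by
    have h := Finset.card_nsmul_le_sum Finset.univ w 1 (fun e _ => hw e)
    rw [Finset.card_univ, nsmul_eq_mul, mul_one] at h
    exact h
  have hW0 : 0 < W := by linarith
  have hrnn : ∀ e', 0 ≤ r e' * f e' ^ 2 := by
    intro e'
    apply mul_nonneg _ (sq_nonneg _)
    rw [hr]
    apply div_nonneg _ (sq_nonneg _)
    have := hw e'
    positivity
  have hsingle : r e * f e ^ 2 ≤ (1 + ε) * W := by
    calc r e * f e ^ 2 ≤ ∑ e', r e' * f e' ^ 2 :=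
          Finset.single_le_sum (fun e' _ => hrnn e') (Finset.mem_univ e)
      _ ≤ (1 + ε) * W := henergy
  have hue : 0 < u e := hu e
  have hterm : ε * W / (3 * m) / u e ^ 2 * f e ^ 2 ≤ r e * f e ^ 2 := by
    apply mul_le_mul_of_nonneg_right _ (sq_nonneg _)
    rw [hr]
    apply div_le_div_of_nonneg_right _ (by positivity)
    have := hw e
    linarith
  have hkey : (f e / u e) ^ 2 ≤ 9 * (m / ε) := by
    have h1 : ε * W / (3 * m) / u e ^ 2 * f e ^ 2 ≤ (1 + ε) * W := le_trans hterm hsingle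
    have h2 : (f e / u e) ^ 2 = f e ^ 2 / u e ^ 2 := by ring
    rw [h2]
    have hc : 0 < ε * W / (3 * m) := by positivity
    have h3 : f e ^ 2 / u e ^ 2 ≤ (1 + ε) * W / (ε * W / (3 * m)) := by
      rw [le_div_iff₀ hc]
      calc f e ^ 2 / u e ^ 2 * (ε * W / (3 * m))
          = ε * W / (3 * m) / u e ^ 2 * f e ^ 2 := by ring
        _ ≤ (1 + ε) * W := h1
    have h4 : (1 + ε) * W / (ε * W / (3 * m)) = 3 * (1 + ε) * m / ε := by
      field_simp
    have h5 : 3 * (1 + ε) * m / ε ≤ 9 * (m / ε) := by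
      have he : 3 * (1 + ε) * m / ε = (3 * (1 + ε)) * (m / ε) := by ring
      rw [he]
      nlinarith [div_pos hm0 hε0]
    calc f e ^ 2 / u e ^ 2 ≤ (1 + ε) * W / (ε * W / (3 * m)) := h3
      _ = 3 * (1 + ε) * m / ε := h4
      _ ≤ 9 * (m / ε) := h5
  have habs : |f e| / u e = |f e / u e| := by
    rw [abs_div, abs_of_pos hue]
  rw [habs]
  have := Real.sqrt_le_sqrt hkey
  rw [Real.sqrt_sq_eq_abs] at this
  calc |f e / u e| ≤ Real.sqrt (9 * (m / ε)) := this
    _ = 3 * Real.sqrt (m / ε) := by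
        rw [show (9:ℝ) = 3^2 by norm_num, Real.sqrt_mul (by positivity), Real.sqrt_sq (by norm_num)]
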